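/- For every R > 0, the set 𝒫_R is adequate with respect to 𝒮_R. That is: (1) for every A ∈ ℝ^{d×d} (viewed as a vector in ℝ^{d²}) and every P ∈ 𝒫_R, ⟨A⊗A, P⟩ ≥ 0; and (2) for all A, B ∈ ℝ^{d×d} and every P ∈ 𝒫_R, ⟨A⊗B, P⟩² ≤ (sup_{V∈𝒮_R}⟨A,V⟩²)·(sup_{V∈𝒮_R}⟨B,V⟩²). -/

import Mathlib

open MeasureTheory ProbabilityTheory Matrix Finset Real Filter

noncomputable section

namespace Paper

variable {d n : ℕ}

/-- Spectral (operator) norm of a matrix. -/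
def specNorm (A : Matrix (Fin d) (Fin d) ℝ) : ℝ :=
  ‖LinearMap.toContinuousLinearMap (Matrix.toEuclideanLin A)‖

/-- Frobenius norm of a matrix. -/
def frobNorm (A : Matrix (Fin d) (Fin d) ℝ) : ℝ :=
  Real.sqrt (∑ i, ∑ j, (A i j) ^ 2)

/-- Effective rank. -/
def erk (A : Matrix (Fin d) (Fin d) ℝ) : ℝ := A.trace / specNorm A

open Classical in
/-- Positive semidefinite square root (junk value `0` if not psd). -/
def matSqrt (A : Matrix (Fin d) (Fin d) ℝ) : Matrix (Fin d) (Fin d) ℝ :=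
  if h : A.PosSemidef then
    (h.1.eigenvectorUnitary : Matrix (Fin d) (Fin d) ℝ) *
      Matrix.diagonal (fun i => Real.sqrt (h.1.eigenvalues i)) *
      (star h.1.eigenvectorUnitary : Matrix (Fin d) (Fin d) ℝ)
  else 0

/-- Inverse of the positive semidefinite square root. -/
def invSqrt (A : Matrix (Fin d) (Fin d) ℝ) : Matrix (Fin d) (Fin d) ℝ := (matSqrt A)⁻¹

/-- Standard Gaussian measure on ℝ^d. -/
def stdGaussian (d : ℕ) : Measure (Fin d → ℝ) :=
  Measure.pi fun _ => gaussianReal 0 1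

/-- Centered Gaussian measure with covariance S. -/
def gaussianOf (S : Matrix (Fin d) (Fin d) ℝ) : Measure (Fin d → ℝ) :=
  (stdGaussian d).map (matSqrt S).mulVec

/-- Spatial sign (projection on the sphere of radius √d). -/
def spSign (d : ℕ) (x : Fin d → ℝ) : Fin d → ℝ :=
  fun i => Real.sqrt d * x i / Real.sqrt (∑ j, (x j) ^ 2)

/-- Truncated spatial sign with threshold Δ. -/
def truncSign (d : ℕ) (Δ : ℝ) (x : Fin d → ℝ) : Fin d → ℝ :=
  if (∑ i, (x i) ^ 2) < (d : ℝ) - Δ then fun i => Real.sqrt ((d : ℝ) / ((d : ℝ) - Δ)) * x i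
  else if (d : ℝ) + Δ < (∑ i, (x i) ^ 2) then fun i => Real.sqrt ((d : ℝ) / ((d : ℝ) + Δ)) * x i
  else spSign d x

/-- Mean vector of a measure on ℝ^d. -/
def meanVec (μ : Measure (Fin d → ℝ)) : Fin d → ℝ := fun i => ∫ x, x i ∂μ

/-- Covariance matrix of a measure on ℝ^d. -/
def covMatrix (μ : Measure (Fin d → ℝ)) : Matrix (Fin d) (Fin d) ℝ :=
  Matrix.of fun i j => ∫ x, (x i - meanVec μ i) * (x j - meanVec μ j) ∂μ

/-- Inner product of vectors indexed by `ι`. -/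
def inner1 {ι : Type*} [Fintype ι] (v x : ι → ℝ) : ℝ := ∑ j, v j * x j

/-- Inner product of "matrices" indexed by `ι × ι`. -/
def innerM {ι : Type*} [Fintype ι] (P Q : ι → ι → ℝ) : ℝ := ∑ j, ∑ k, P j k * Q j k

/-- Outer product. -/
def outer {ι : Type*} (x y : ι → ℝ) : ι → ι → ℝ := fun j k => x j * y k

/-- sup_{v ∈ V} ⟨v, a⟩². -/
def supInner {ι : Type*} [Fintype ι] (V : Set (ι → ℝ)) (a : ι → ℝ) : ℝ :=
  sSup ((fun v => (inner1 v a) ^ 2) '' V)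

/-- Generalized stability (Definition 4 of the paper). -/
def IsStable {ι : Type*} [Fintype ι] (x : Fin n → ι → ℝ) (ε δ r : ℝ)
    (V : Set (ι → ℝ)) (P : Set (ι → ι → ℝ)) (μ : ι → ℝ) (Q : ι → ι → ℝ) : Prop :=
  ∀ v ∈ V, ∀ p ∈ P, ∀ M : Finset (Fin n), (1 - ε) * (n : ℝ) ≤ (M.card : ℝ) →
    |(M.card : ℝ)⁻¹ * ∑ i ∈ M, inner1 v (fun j => x i j - μ j)| ≤ δ ∧
    |(M.card : ℝ)⁻¹ * ∑ i ∈ M, innerM p (outer (fun j => x i j - μ j) (fun j => x i j - μ j))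
        - innerM p Q| ≤ δ ^ 2 / ε ∧
    |innerM p Q| ≤ r ^ 2

/-- 𝒱 ⊗ 𝒱 ⊆ 𝒫. -/
def TensorSub {ι : Type*} (V : Set (ι → ℝ)) (P : Set (ι → ι → ℝ)) : Prop :=
  ∀ v ∈ V, ∀ v' ∈ V, outer v v' ∈ P

/-- Adequacy of 𝒫 with respect to 𝒱. -/
def Adequate {ι : Type*} [Fintype ι] (V : Set (ι → ℝ)) (P : Set (ι → ι → ℝ)) : Prop :=
  (∀ a : ι → ℝ, ∀ p ∈ P, 0 ≤ innerM p (outer a a)) ∧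
  (∀ a b : ι → ℝ, ∀ p ∈ P, (innerM p (outer a b)) ^ 2 ≤ supInner V a * supInner V b)

/-- The weight set 𝒲_ε. -/
def weightSet (n : ℕ) (ε : ℝ) : Set (Fin n → ℝ) :=
  {w | (∀ i, 0 ≤ w i ∧ w i ≤ 1 / (n : ℝ)) ∧ 1 - ε ≤ ∑ i, w i}

/-- Weighted mean μ_w. -/
def wMean {ι : Type*} (w : Fin n → ℝ) (x : Fin n → ι → ℝ) : ι → ℝ :=
  fun j => (∑ i, w i)⁻¹ * ∑ i, w i * x i j

/-- Weighted covariance Σ_w. -/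
def wCov {ι : Type*} (w : Fin n → ℝ) (x : Fin n → ι → ℝ) : ι → ι → ℝ :=
  fun j k => (∑ i, w i)⁻¹ * ∑ i, w i * (x i j - wMean w x j) * (x i k - wMean w x k)

/-- A d×d matrix viewed as a vector in ℝ^{d²}. -/
def mvec (A : Matrix (Fin d) (Fin d) ℝ) : Fin d × Fin d → ℝ := fun p => A p.1 p.2

/-- Id_d as a vector in ℝ^{d²}. -/
def idVec (d : ℕ) : Fin d × Fin d → ℝ := fun p => if p.1 = p.2 then 1 else 0

/-- 2·Id_{d²}. -/
def twoId (d : ℕ) : (Fin d × Fin d) → (Fin d × Fin d) → ℝ :=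
  fun p q => if p = q then 2 else 0

/-- The Frobenius-norm ball ℬ_R (as vectors in ℝ^{d²}). -/
def ballF (d : ℕ) (R : ℝ) : Set (Fin d × Fin d → ℝ) :=
  {V | ∑ p : Fin d × Fin d, (V p) ^ 2 ≤ R ^ 2}

/-- ℬ_R ⊗ ℬ_R. -/
def ballFT (d : ℕ) (R : ℝ) : Set ((Fin d × Fin d) → (Fin d × Fin d) → ℝ) :=
  {P | ∃ V ∈ ballF d R, ∃ W ∈ ballF d R, P = outer V W}

/-- 𝒮_R = {uuᵀ : ‖u‖ ≤ √R}. -/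
def sphereSet (d : ℕ) (R : ℝ) : Set (Fin d × Fin d → ℝ) :=
  {V | ∃ u : Fin d → ℝ, (∑ i, (u i) ^ 2) ≤ R ∧ V = fun p => u p.1 * u p.2}

/-- 𝒫_R: the set of degree-4 pseudo-expectation moment matrices Ẽ[v^{⊗4}]
under the constraint ‖v‖² ≤ R. -/
def pseudoSet (d : ℕ) (R : ℝ) : Set ((Fin d × Fin d) → (Fin d × Fin d) → ℝ) :=
  {P | ∃ L : MvPolynomial (Fin d) ℝ →ₗ[ℝ] ℝ,
    L 1 = 1 ∧
    (∀ q : MvPolynomial (Fin d) ℝ, q.totalDegree ≤ 2 → 0 ≤ L (q ^ 2)) ∧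
    (∀ q : MvPolynomial (Fin d) ℝ, q.totalDegree ≤ 1 →
      0 ≤ L ((MvPolynomial.C R - ∑ i, MvPolynomial.X i ^ 2) * q ^ 2)) ∧
    P = fun p q => L (MvPolynomial.X p.1 * MvPolynomial.X p.2 *
        MvPolynomial.X q.1 * MvPolynomial.X q.2)}

/-- The Hanson–Wright property of a distribution ρ with mean μv and covariance S. -/
def HansonWright (ρ : Measure (Fin d → ℝ)) (μv : Fin d → ℝ)
    (S : Matrix (Fin d) (Fin d) ℝ) (CHW : ℝ) : Prop :=
  ∀ A : Matrix (Fin d) (Fin d) ℝ, ∀ t : ℝ, 0 < t →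
    ρ {x | t ≤ |(∑ j, ∑ k, ((invSqrt S).mulVec (fun l => x l - μv l)) j * A j k *
        ((invSqrt S).mulVec (fun l => x l - μv l)) k) - A.trace|}
      ≤ ENNReal.ofReal (2 * Real.exp (-(1 / CHW) *
          min (t ^ 2 / (frobNorm A) ^ 2) (t / specNorm A)))

/-- ε-corruption of an indexed family of points. -/
def Corruption {α : Type*} (n : ℕ) (ε : ℝ) (x y : Fin n → α) : Prop :=
  ∃ G : Finset (Fin n), (1 - ε) * (n : ℝ) ≤ (G.card : ℝ) ∧ ∀ i ∈ G, x i = y i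

/-- Entries of the 4-tensor E[(xxᵀ − Id)^{⊗2}] of a measure μ on ℝ^d. -/
def tensorEnt (μ : Measure (Fin d → ℝ)) (i1 i2 i3 i4 : Fin d) : ℝ :=
  ∫ x, (x i1 * x i2 - if i1 = i2 then (1 : ℝ) else 0) *
       (x i3 * x i4 - if i3 = i4 then (1 : ℝ) else 0) ∂μ

/-- E[(xxᵀ − Id)^{⊗2}] as a d²×d² matrix. -/
def tensorQ (μ : Measure (Fin d → ℝ)) : (Fin d × Fin d) → (Fin d × Fin d) → ℝ :=
  fun p q => tensorEnt μ p.1 p.2 q.1 q.2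



section AdequacyAux
open MvPolynomial

variable {d : ℕ}

open scoped MatrixOrder in
noncomputable def _root_.Matrix.PosSemidef.sqrt {d : ℕ} {B : Matrix (Fin d) (Fin d) ℝ}
    (_hB : B.PosSemidef) : Matrix (Fin d) (Fin d) ℝ := CFC.sqrt B

open scoped MatrixOrder in
theorem _root_.Matrix.PosSemidef.sqrt_mul_self {d : ℕ} {B : Matrix (Fin d) (Fin d) ℝ}
    (hB : B.PosSemidef) : hB.sqrt * hB.sqrt = B :=
  CFC.sqrt_mul_sqrt_self B hB.nonneg

open scoped MatrixOrder in
theorem _root_.Matrix.PosSemidef.posSemidef_sqrt {d : ℕ} {B : Matrix (Fin d) (Fin d) ℝ}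
    (hB : B.PosSemidef) : hB.sqrt.PosSemidef := by
  have h := CFC.sqrt_nonneg B
  show (CFC.sqrt B).PosSemidef
  rw [← sub_zero (CFC.sqrt B)]
  exact h

private def PLin (s : Fin d → ℝ) : MvPolynomial (Fin d) ℝ := ∑ j, C (s j) * X j

private def PQuad (B : Matrix (Fin d) (Fin d) ℝ) : MvPolynomial (Fin d) ℝ :=
  ∑ i, ∑ j, C (B i j) * (X i * X j)

private def qpoly (A : Fin d × Fin d → ℝ) : MvPolynomial (Fin d) ℝ :=
  ∑ p : Fin d × Fin d, C (A p) * (X p.1 * X p.2)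

private lemma PLin_deg (s : Fin d → ℝ) : (PLin s).totalDegree ≤ 1 := by
  refine totalDegree_finsetSum_le fun j _ => ?_
  refine (totalDegree_mul _ _).trans ?_
  simp [totalDegree_C, totalDegree_X]

private lemma tD_CXX (a : ℝ) (i j : Fin d) :
    (C a * (X i * X j) : MvPolynomial (Fin d) ℝ).totalDegree ≤ 2 := by
  refine (totalDegree_mul _ _).trans ?_
  refine le_trans (add_le_add le_rfl (totalDegree_mul _ _)) ?_
  simp [totalDegree_C, totalDegree_X]

private lemma PQuad_deg (B : Matrix (Fin d) (Fin d) ℝ) : (PQuad B).totalDegree ≤ 2 :=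
  totalDegree_finsetSum_le fun i _ => totalDegree_finsetSum_le fun j _ => tD_CXX _ _ _

private lemma qpoly_deg (A : Fin d × Fin d → ℝ) : (qpoly A).totalDegree ≤ 2 :=
  totalDegree_finsetSum_le fun p _ => tD_CXX _ _ _

private lemma g_deg (R : ℝ) :
    ((C R - ∑ i, X i ^ 2 : MvPolynomial (Fin d) ℝ)).totalDegree ≤ 2 := by
  refine (totalDegree_sub _ _).trans (max_le (by simp [totalDegree_C]) ?_)
  refine totalDegree_finsetSum_le fun i _ => ?_
  refine (totalDegree_pow _ _).trans ?_
  simp [totalDegree_X]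

private lemma PLin_sq (s : Fin d → ℝ) :
    (PLin s) ^ 2 = ∑ i, ∑ j, C (s i * s j) * (X i * X j) := by
  rw [sq, PLin, Finset.sum_mul_sum]
  refine Finset.sum_congr rfl fun i _ => Finset.sum_congr rfl fun j _ => ?_
  rw [_root_.map_mul]; ring

private lemma PQuad_sos {B : Matrix (Fin d) (Fin d) ℝ} (hB : B.PosSemidef) :
    PQuad B = ∑ k, (PLin fun j => hB.sqrt k j) ^ 2 := by
  have hs : hB.sqrt * hB.sqrt = B := hB.sqrt_mul_self
  have hsym : ∀ i j, hB.sqrt j i = hB.sqrt i j := fun i j => by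
    have := hB.posSemidef_sqrt.1.apply i j
    simpa using this
  calc PQuad B
      = ∑ i, ∑ j, ∑ k, C (hB.sqrt k i * hB.sqrt k j) * (X i * X j) := by
        refine Finset.sum_congr rfl fun i _ => Finset.sum_congr rfl fun j _ => ?_
        rw [← Finset.sum_mul, ← _root_.map_sum]
        have hBij : B i j = ∑ k, hB.sqrt k i * hB.sqrt k j := by
          calc B i j = (hB.sqrt * hB.sqrt) i j := by rw [hs]
            _ = ∑ k, hB.sqrt i k * hB.sqrt k j := Matrix.mul_apply
            _ = ∑ k, hB.sqrt k i * hB.sqrt k j :=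
                Finset.sum_congr rfl fun k _ => by rw [hsym i k]
        rw [show C (B i j) = C (∑ k, hB.sqrt k i * hB.sqrt k j) from congrArg C hBij]
    _ = ∑ i, ∑ k, ∑ j, C (hB.sqrt k i * hB.sqrt k j) * (X i * X j) :=
        Finset.sum_congr rfl fun i _ => Finset.sum_comm
    _ = ∑ k, ∑ i, ∑ j, C (hB.sqrt k i * hB.sqrt k j) * (X i * X j) := Finset.sum_comm
    _ = ∑ k, (PLin fun j => hB.sqrt k j) ^ 2 := by
        refine Finset.sum_congr rfl fun k _ => ?_
        rw [PLin_sq]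

private lemma PQuad_sub (B B' : Matrix (Fin d) (Fin d) ℝ) :
    PQuad (B - B') = PQuad B - PQuad B' := by
  simp [PQuad, Matrix.sub_apply, _root_.map_sub, sub_mul, Finset.sum_sub_distrib]

private lemma PQuad_add (B B' : Matrix (Fin d) (Fin d) ℝ) :
    PQuad (B + B') = PQuad B + PQuad B' := by
  simp [PQuad, Matrix.add_apply, _root_.map_add, add_mul, Finset.sum_add_distrib]

private lemma PQuad_smul_one (c : ℝ) :
    PQuad (c • (1 : Matrix (Fin d) (Fin d) ℝ)) = C c * ∑ i, X i ^ 2 := by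
  rw [PQuad, Finset.mul_sum]
  refine Finset.sum_congr rfl fun i _ => ?_
  rw [show (∑ j, C ((c • (1 : Matrix (Fin d) (Fin d) ℝ)) i j) * (X i * X j))
      = ∑ j, if i = j then C c * (X i * X j) else 0 from
      Finset.sum_congr rfl fun j _ => by
        by_cases h : i = j <;> simp [Matrix.smul_apply, Matrix.one_apply, h]]
  rw [Finset.sum_ite_eq]
  simp [sq]

private lemma CS_bound (L : MvPolynomial (Fin d) ℝ →ₗ[ℝ] ℝ)
    (hL2 : ∀ q : MvPolynomial (Fin d) ℝ, q.totalDegree ≤ 2 → 0 ≤ L (q ^ 2))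
    (f g : MvPolynomial (Fin d) ℝ) (hf : f.totalDegree ≤ 2) (hg : g.totalDegree ≤ 2) :
    L (f * g) ^ 2 ≤ L (f ^ 2) * L (g ^ 2) := by
  have key : ∀ x : ℝ, 0 ≤ L (f ^ 2) * (x * x) + (2 * L (f * g)) * x + L (g ^ 2) := by
    intro x
    have hdeg : (C x * f + g).totalDegree ≤ 2 := by
      refine (totalDegree_add _ _).trans (max_le ?_ hg)
      refine (totalDegree_mul _ _).trans ?_
      simpa [totalDegree_C] using hf
    have h := hL2 _ hdeg
    have hexp : (C x * f + g) ^ 2 = (x * x) • f ^ 2 + (2 * x) • (f * g) + g ^ 2 := by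
      rw [smul_eq_C_mul, smul_eq_C_mul, _root_.map_mul, _root_.map_mul]
      rw [show (C (2 : ℝ) : MvPolynomial (Fin d) ℝ) = 2 from
        _root_.map_ofNat (C : ℝ →+* MvPolynomial (Fin d) ℝ) 2]
      ring
    rw [hexp, _root_.map_add, _root_.map_add, _root_.map_smul, _root_.map_smul, smul_eq_mul, smul_eq_mul] at h
    nlinarith [h]
  have hd := discrim_le_zero key
  rw [discrim] at hd
  nlinarith [hd]

private lemma innerM_eq (L : MvPolynomial (Fin d) ℝ →ₗ[ℝ] ℝ) (A B : Fin d × Fin d → ℝ) :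
    innerM (fun p q : Fin d × Fin d => L (X p.1 * X p.2 * X q.1 * X q.2)) (outer A B)
      = L (qpoly A * qpoly B) := by
  unfold innerM outer qpoly
  rw [Finset.sum_mul_sum, _root_.map_sum]
  refine Finset.sum_congr rfl fun p _ => ?_
  rw [_root_.map_sum]
  refine Finset.sum_congr rfl fun q _ => ?_
  rw [show (C (A p) * (X p.1 * X p.2)) * (C (B q) * (X q.1 * X q.2))
      = (A p * B q) • (X p.1 * X p.2 * X q.1 * X q.2) by
        rw [smul_eq_C_mul, _root_.map_mul]; ring]
  rw [_root_.map_smul, smul_eq_mul]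
  ring

private lemma le_supInner_of (R : ℝ) (A : Fin d × Fin d → ℝ)
    (u : Fin d → ℝ) (hu : ∑ i, u i ^ 2 ≤ R) :
    (∑ p : Fin d × Fin d, u p.1 * u p.2 * A p) ^ 2 ≤ supInner (sphereSet d R) A := by
  have hbdd : ∀ y ∈ (fun v => (inner1 v A) ^ 2) '' sphereSet d R,
      y ≤ (∑ p : Fin d × Fin d, A p ^ 2) * R ^ 2 := by
    rintro y ⟨V, ⟨w, hw, rfl⟩, rfl⟩
    have h1 : (inner1 (fun p : Fin d × Fin d => w p.1 * w p.2) A) ^ 2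
        ≤ (∑ p : Fin d × Fin d, (w p.1 * w p.2) ^ 2) * ∑ p : Fin d × Fin d, A p ^ 2 := by
      simpa [inner1] using
        Finset.sum_mul_sq_le_sq_mul_sq Finset.univ (fun p : Fin d × Fin d => w p.1 * w p.2) A
    have h2 : (∑ p : Fin d × Fin d, (w p.1 * w p.2) ^ 2) = (∑ i, w i ^ 2) ^ 2 := by
      rw [Fintype.sum_prod_type,
        show ((∑ i, w i ^ 2) ^ 2 = ∑ i, ∑ j, w i ^ 2 * w j ^ 2) from by
          rw [sq, Finset.sum_mul_sum]]
      exact Finset.sum_congr rfl fun i _ => Finset.sum_congr rfl fun j _ => by ring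
    have h3 : (∑ i, w i ^ 2) ^ 2 ≤ R ^ 2 :=
      pow_le_pow_left₀ (Finset.sum_nonneg fun i _ => sq_nonneg _) hw 2
    calc (inner1 (fun p : Fin d × Fin d => w p.1 * w p.2) A) ^ 2
        ≤ (∑ p : Fin d × Fin d, (w p.1 * w p.2) ^ 2) * ∑ p : Fin d × Fin d, A p ^ 2 := h1
      _ ≤ R ^ 2 * ∑ p : Fin d × Fin d, A p ^ 2 := by
          rw [h2]
          exact mul_le_mul_of_nonneg_right h3 (Finset.sum_nonneg fun p _ => sq_nonneg _)
      _ = (∑ p : Fin d × Fin d, A p ^ 2) * R ^ 2 := by ring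
  refine le_csSup ⟨_, hbdd⟩ ?_
  refine ⟨fun p => u p.1 * u p.2, ⟨u, hu, rfl⟩, ?_⟩
  simp only [inner1]

private lemma supInner_nonneg' (R : ℝ) (hR : 0 ≤ R) (A : Fin d × Fin d → ℝ) :
    0 ≤ supInner (sphereSet d R) A := by
  have := le_supInner_of R A (fun _ => 0) (by simpa using hR)
  simpa using this

private lemma key_bound (R : ℝ) (hR : 0 < R) (L : MvPolynomial (Fin d) ℝ →ₗ[ℝ] ℝ)
    (hL1 : L 1 = 1)
    (hL2 : ∀ q : MvPolynomial (Fin d) ℝ, q.totalDegree ≤ 2 → 0 ≤ L (q ^ 2))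
    (hL3 : ∀ q : MvPolynomial (Fin d) ℝ, q.totalDegree ≤ 1 →
      0 ≤ L ((C R - ∑ i, X i ^ 2) * q ^ 2))
    (A : Fin d × Fin d → ℝ) :
    L (qpoly A ^ 2) ≤ supInner (sphereSet d R) A := by
  have hLC : ∀ r : ℝ, L (C r) = r := by
    intro r
    have h : (C r : MvPolynomial (Fin d) ℝ) = r • 1 := by
      rw [smul_eq_C_mul, mul_one]
    rw [h, _root_.map_smul, hL1, smul_eq_mul, mul_one]
  set sup := supInner (sphereSet d R) A with hsup
  have hsup0 : 0 ≤ sup := supInner_nonneg' R hR.le A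
  set s := Real.sqrt sup with hs
  have hs0 : 0 ≤ s := Real.sqrt_nonneg _
  have hss : s ^ 2 = sup := Real.sq_sqrt hsup0
  set c := s / R with hc
  have hc0 : 0 ≤ c := div_nonneg hs0 hR.le
  set As : Matrix (Fin d) (Fin d) ℝ := Matrix.of fun i j => (A (i, j) + A (j, i)) / 2 with hAs
  -- qpoly A = PQuad As
  have hqA : qpoly A = PQuad As := by
    have hswap : (∑ i, ∑ j, C (A (j, i)) * (X i * X j) : MvPolynomial (Fin d) ℝ)
        = ∑ i, ∑ j, C (A (i, j)) * (X i * X j) := by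
      rw [Finset.sum_comm]
      exact Finset.sum_congr rfl fun i _ => Finset.sum_congr rfl fun j _ => by ring
    have h1 : qpoly A = ∑ i, ∑ j, C (A (i, j)) * (X i * X j) := by
      rw [qpoly, Fintype.sum_prod_type]
    have h2 : PQuad As = ∑ i, ∑ j,
        ((1 / 2 : ℝ) • (C (A (i, j)) * (X i * X j))
          + (1 / 2 : ℝ) • (C (A (j, i)) * (X i * X j))) := by
      refine Finset.sum_congr rfl fun i _ => Finset.sum_congr rfl fun j _ => ?_
      rw [smul_eq_C_mul, smul_eq_C_mul]
      have h3 : As i j = (1 / 2) * A (i, j) + (1 / 2) * A (j, i) := by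
        simp only [hAs, Matrix.of_apply]; ring
      rw [h3, _root_.map_add, _root_.map_mul, _root_.map_mul]
      ring
    rw [h1, h2]
    simp only [Finset.sum_add_distrib, ← Finset.smul_sum]
    rw [hswap, ← add_smul]
    norm_num
  -- quadratic form of As
  have quadAs : ∀ x : Fin d → ℝ,
      x ⬝ᵥ (As *ᵥ x) = ∑ p : Fin d × Fin d, x p.1 * x p.2 * A p := by
    intro x
    have hswap : ∑ i, ∑ j, x i * x j * A (j, i) = ∑ i, ∑ j, x i * x j * A (i, j) := by
      rw [Finset.sum_comm]
      exact Finset.sum_congr rfl fun i _ => Finset.sum_congr rfl fun j _ => by ring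
    have h1 : x ⬝ᵥ (As *ᵥ x)
        = ∑ i, ∑ j, (x i * x j * A (i, j) + x i * x j * A (j, i)) / 2 := by
      simp only [dotProduct, Matrix.mulVec, Finset.mul_sum]
      refine Finset.sum_congr rfl fun i _ => Finset.sum_congr rfl fun j _ => ?_
      simp only [hAs, Matrix.of_apply]
      ring
    rw [h1, Fintype.sum_prod_type]
    simp only [add_div, Finset.sum_add_distrib, ← Finset.sum_div]
    rw [hswap]
    ring
  -- Rayleigh-type bound
  have hray : ∀ x : Fin d → ℝ, |x ⬝ᵥ (As *ᵥ x)| ≤ c * ∑ i, x i ^ 2 := by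
    intro x
    rcases eq_or_lt_of_le (Finset.sum_nonneg fun i _ => sq_nonneg (x i)) with h0 | hpos
    · have hx : ∀ i, x i = 0 := by
        intro i
        have := (Finset.sum_eq_zero_iff_of_nonneg
          (fun i _ => sq_nonneg (x i))).mp h0.symm i (Finset.mem_univ i)
        exact sq_eq_zero_iff.mp this
      have hz : x ⬝ᵥ (As *ᵥ x) = 0 := by
        rw [quadAs]
        exact Finset.sum_eq_zero fun p _ => by rw [hx p.1]; ring
      rw [hz, ← h0]
      simp
    · set t := ∑ i, x i ^ 2 with ht
      have htpos : 0 < t := hpos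
      set u : Fin d → ℝ := fun i => Real.sqrt (R / t) * x i with hu
      have hRt : (0:ℝ) ≤ R / t := div_nonneg hR.le htpos.le
      have hsq : Real.sqrt (R / t) ^ 2 = R / t := Real.sq_sqrt hRt
      have hu2 : ∑ i, u i ^ 2 = R := by
        simp only [hu, mul_pow, ← Finset.mul_sum]
        rw [hsq, ← ht, div_mul_cancel₀ _ htpos.ne']
      have hle := le_supInner_of R A u (le_of_eq hu2)
      have hfac : ∑ p : Fin d × Fin d, u p.1 * u p.2 * A p
          = (R / t) * ∑ p : Fin d × Fin d, x p.1 * x p.2 * A p := by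
        rw [Finset.mul_sum]
        refine Finset.sum_congr rfl fun p _ => ?_
        simp only [hu]
        have hmm : Real.sqrt (R / t) * Real.sqrt (R / t) = R / t := by
          rw [← sq]; exact hsq
        calc (Real.sqrt (R / t) * x p.1) * (Real.sqrt (R / t) * x p.2) * A p
            = (Real.sqrt (R / t) * Real.sqrt (R / t)) * (x p.1 * x p.2 * A p) := by ring
          _ = (R / t) * (x p.1 * x p.2 * A p) := by rw [hmm]
      rw [hfac, ← quadAs x] at hle
      have hQ : ((R / t) * (x ⬝ᵥ (As *ᵥ x))) ^ 2 ≤ s ^ 2 := by rw [hss]; exact hle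
      have habs : |(R / t) * (x ⬝ᵥ (As *ᵥ x))| ≤ s := by
        have h' := Real.sqrt_le_sqrt hQ
        rwa [Real.sqrt_sq_eq_abs, Real.sqrt_sq hs0] at h'
      have hRt' : 0 < R / t := div_pos hR htpos
      have h2 : (R / t) * |x ⬝ᵥ (As *ᵥ x)| ≤ s := by
        rwa [abs_mul, abs_of_pos hRt'] at habs
      rw [hc, div_mul_eq_mul_div, le_div_iff₀ hR]
      have h3 : t * (R / t) = R := by field_simp
      calc |x ⬝ᵥ (As *ᵥ x)| * R = t * ((R / t) * |x ⬝ᵥ (As *ᵥ x)|) := by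
            rw [← mul_assoc, h3]; ring
        _ ≤ t * s := mul_le_mul_of_nonneg_left h2 htpos.le
        _ = s * t := mul_comm _ _
  -- positive semidefiniteness of c•1 ± As
  have hxx : ∀ x : Fin d → ℝ, x ⬝ᵥ x = ∑ i, x i ^ 2 := by
    intro x; simp [dotProduct, sq]
  have hB1 : (c • (1 : Matrix (Fin d) (Fin d) ℝ) - As).PosSemidef := by
    refine Matrix.PosSemidef.of_dotProduct_mulVec_nonneg ?_ ?_
    · rw [Matrix.IsHermitian]
      ext i j
      simp only [Matrix.conjTranspose_apply, Matrix.sub_apply, Matrix.smul_apply,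
        Matrix.one_apply, hAs, Matrix.of_apply, star_trivial, smul_eq_mul]
      rw [show (if j = i then (1:ℝ) else 0) = (if i = j then 1 else 0) by simp [eq_comm]]
      ring
    · intro x
      rw [star_trivial]
      have hdot : x ⬝ᵥ ((c • (1 : Matrix (Fin d) (Fin d) ℝ) - As) *ᵥ x)
          = c * (∑ i, x i ^ 2) - x ⬝ᵥ (As *ᵥ x) := by
        rw [Matrix.sub_mulVec, dotProduct_sub, Matrix.smul_mulVec,
          Matrix.one_mulVec, dotProduct_smul, smul_eq_mul, hxx]
      rw [hdot]
      have h1 := neg_abs_le (x ⬝ᵥ (As *ᵥ x))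
      have h2 := le_abs_self (x ⬝ᵥ (As *ᵥ x))
      have h3 := hray x
      linarith
  have hB2 : (c • (1 : Matrix (Fin d) (Fin d) ℝ) + As).PosSemidef := by
    refine Matrix.PosSemidef.of_dotProduct_mulVec_nonneg ?_ ?_
    · rw [Matrix.IsHermitian]
      ext i j
      simp only [Matrix.conjTranspose_apply, Matrix.add_apply, Matrix.smul_apply,
        Matrix.one_apply, hAs, Matrix.of_apply, star_trivial, smul_eq_mul]
      rw [show (if j = i then (1:ℝ) else 0) = (if i = j then 1 else 0) by simp [eq_comm]]
      ring
    · intro x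
      rw [star_trivial]
      have hdot : x ⬝ᵥ ((c • (1 : Matrix (Fin d) (Fin d) ℝ) + As) *ᵥ x)
          = c * (∑ i, x i ^ 2) + x ⬝ᵥ (As *ᵥ x) := by
        rw [Matrix.add_mulVec, dotProduct_add, Matrix.smul_mulVec,
          Matrix.one_mulVec, dotProduct_smul, smul_eq_mul, hxx]
      rw [hdot]
      have h1 := neg_abs_le (x ⬝ᵥ (As *ᵥ x))
      have h2 := le_abs_self (x ⬝ᵥ (As *ᵥ x))
      have h3 := hray x
      linarith
  -- polynomial identity
  have hid1 : PQuad (c • (1 : Matrix (Fin d) (Fin d) ℝ) - As)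
      = C c * (∑ i, X i ^ 2) - PQuad As := by
    rw [PQuad_sub, PQuad_smul_one]
  have hid2 : PQuad (c • (1 : Matrix (Fin d) (Fin d) ℝ) + As)
      = C c * (∑ i, X i ^ 2) + PQuad As := by
    rw [PQuad_add, PQuad_smul_one]
  have hcR : c * R = s := div_mul_cancel₀ s hR.ne'
  have main : C (s ^ 2) - (PQuad As) ^ 2
      = PQuad (c • (1 : Matrix (Fin d) (Fin d) ℝ) - As)
          * PQuad (c • (1 : Matrix (Fin d) (Fin d) ℝ) + As)
        + (C c * ((C R - ∑ i, X i ^ 2)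
              * PQuad (c • (1 : Matrix (Fin d) (Fin d) ℝ) - As))
          + C c * ((C R - ∑ i, X i ^ 2)
              * PQuad (c • (1 : Matrix (Fin d) (Fin d) ℝ) + As)))
        + C (c ^ 2) * (C R - ∑ i, X i ^ 2) ^ 2 := by
    rw [hid1, hid2]
    rw [show (C (s ^ 2) : MvPolynomial (Fin d) ℝ) = C c * C c * (C R * C R) by
      rw [← _root_.map_mul, ← _root_.map_mul, ← _root_.map_mul]; congr 1; rw [← hcR]; ring]
    rw [show (C (c ^ 2) : MvPolynomial (Fin d) ℝ) = C c * C c by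
      rw [← _root_.map_mul]; congr 1; ring]
    ring
  -- positivity of the three parts
  have t1 : 0 ≤ L (PQuad (c • (1 : Matrix (Fin d) (Fin d) ℝ) - As)
      * PQuad (c • (1 : Matrix (Fin d) (Fin d) ℝ) + As)) := by
    rw [PQuad_sos hB1, PQuad_sos hB2, Finset.sum_mul_sum, _root_.map_sum]
    refine Finset.sum_nonneg fun k _ => ?_
    rw [_root_.map_sum]
    refine Finset.sum_nonneg fun l _ => ?_
    rw [show (PLin fun j => hB1.sqrt k j) ^ 2 * (PLin fun j => hB2.sqrt l j) ^ 2
        = ((PLin fun j => hB1.sqrt k j) * (PLin fun j => hB2.sqrt l j)) ^ 2 by ring]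
    refine hL2 _ ?_
    refine (totalDegree_mul _ _).trans ?_
    have hh1 := PLin_deg (fun j => hB1.sqrt k j)
    have hh2 := PLin_deg (fun j => hB2.sqrt l j)
    omega
  have t2 : ∀ {B : Matrix (Fin d) (Fin d) ℝ}, B.PosSemidef →
      0 ≤ L (C c * ((C R - ∑ i, X i ^ 2) * PQuad B)) := by
    intro B hB
    rw [← smul_eq_C_mul, _root_.map_smul, smul_eq_mul]
    refine mul_nonneg hc0 ?_
    rw [PQuad_sos hB, Finset.mul_sum, _root_.map_sum]
    exact Finset.sum_nonneg fun k _ => hL3 _ (PLin_deg _)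
  have t3 : 0 ≤ L (C (c ^ 2) * (C R - ∑ i, X i ^ 2) ^ 2) := by
    rw [← smul_eq_C_mul, _root_.map_smul, smul_eq_mul]
    exact mul_nonneg (sq_nonneg c) (hL2 _ (g_deg R))
  have hfin : 0 ≤ L (C (s ^ 2) - (PQuad As) ^ 2) := by
    rw [main, _root_.map_add, _root_.map_add, _root_.map_add]
    have u1 := t2 hB1
    have u2 := t2 hB2
    linarith
  rw [_root_.map_sub, hLC] at hfin
  rw [hqA]
  linarith

end AdequacyAux


/-- 𝒫_R is adequate with respect to 𝒮_R. -/
theorem pseudoSet_adequate (d : ℕ) (R : ℝ) (hR : 0 < R) :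
    (∀ A : Fin d × Fin d → ℝ, ∀ P ∈ pseudoSet d R, 0 ≤ innerM P (outer A A)) ∧
    (∀ A B : Fin d × Fin d → ℝ, ∀ P ∈ pseudoSet d R,
      (innerM P (outer A B)) ^ 2 ≤
        supInner (sphereSet d R) A * supInner (sphereSet d R) B) := by
  constructor
  · rintro A P ⟨L, hL1, hL2, hL3, rfl⟩
    rw [innerM_eq]
    rw [show qpoly A * qpoly A = qpoly A ^ 2 by ring]
    exact hL2 _ (qpoly_deg A)
  · rintro A B P ⟨L, hL1, hL2, hL3, rfl⟩
    rw [innerM_eq]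
    calc L (qpoly A * qpoly B) ^ 2 ≤ L (qpoly A ^ 2) * L (qpoly B ^ 2) :=
          CS_bound L hL2 _ _ (qpoly_deg A) (qpoly_deg B)
      _ ≤ supInner (sphereSet d R) A * supInner (sphereSet d R) B :=
          mul_le_mul (key_bound R hR L hL1 hL2 hL3 A) (key_bound R hR L hL1 hL2 hL3 B)
            (hL2 _ (qpoly_deg B)) (supInner_nonneg' R hR.le A)

end Paper
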